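/- Let c : X* → ℝ be a formal power series whose coefficients satisfy |(c,η)| ≤ K M^{|η|} for all words η (global convergence bound), and let u : [t0,t1] → ℝ^m be measurable with |u_i(t)| ≤ R a.e.; set R̄ := max(R,1). Then for every t ∈ [t0,t1] (with t1 − t0 arbitrary) the family (|(c,η)| · |E_η[u](t,t0)|)_{η ∈ X*} is summable, and |Σ_{η ∈ X*} (c,η) E_η[u](t,t0)| ≤ K · exp((m+1) M R̄ (t − t0)). In particular the Fliess operator F_c is well defined on [t0, t0+T] for all R, T > 0. -/

import Mathlib

open MeasureTheory

/-- Extend `u : ℝ → ℝ^m` to the alphabet `X = {x_0, x_1, …, x_m}` by `u_0 ≡ 1`. -/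
noncomputable def uext (m : ℕ) (u : ℝ → Fin m → ℝ) : ℝ → Fin (m + 1) → ℝ :=
  fun t => Fin.cases 1 (fun j => u t j)

/-- Iterated integrals `E_η[u](t, t0)`: `E_∅[u] ≡ 1` and
`E_{x_i η̄}[u](t,t0) = ∫_{t0}^t u_i(τ) E_{η̄}[u](τ,t0) dτ`. -/
noncomputable def iterInt (m : ℕ) (u : ℝ → Fin m → ℝ) (t0 : ℝ) :
    List (Fin (m + 1)) → ℝ → ℝ
  | [] => fun _ => 1
  | i :: w => fun t => ∫ τ in t0..t, uext m u τ i * iterInt m u t0 w τ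

/-- Global convergence of Fliess operators.  If `|(c,η)| ≤ K M^{|η|}` for all words `η`,
`|u_i| ≤ R` a.e. on `[t0,t1]` and `R̄ = max R 1`, then for every `t ∈ [t0,t1]` (with
`t1 − t0` arbitrary) the family `(|(c,η)| |E_η[u](t,t0)|)_η` is summable and
`|Σ_η (c,η) E_η[u](t,t0)| ≤ K exp((m+1) M R̄ (t − t0))`; in particular the Fliess
operator `F_c` is well defined on `[t0, t0+T]` for all `R, T > 0`. -/
lemma iter_key (m : ℕ) (t0 t1 R : ℝ) (hle : t0 ≤ t1)
    (u : ℝ → Fin m → ℝ) (hmeas : ∀ i, Measurable fun t => u t i)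
    (hbd : ∀ i, ∀ᵐ t ∂(volume.restrict (Set.Icc t0 t1)), |u t i| ≤ R) :
    ∀ η : List (Fin (m + 1)),
      AEStronglyMeasurable (iterInt m u t0 η) (volume.restrict (Set.Icc t0 t1)) ∧
      ∀ t ∈ Set.Icc t0 t1,
        |iterInt m u t0 η t| ≤
          (max R 1) ^ η.length * (t - t0) ^ η.length / η.length.factorial := by
  set Rb := max R 1 with hRb
  have hRb1 : (1 : ℝ) ≤ Rb := le_max_right _ _
  have hRb0 : (0 : ℝ) ≤ Rb := by linarith
  have huext_meas : ∀ i : Fin (m + 1), Measurable fun τ => uext m u τ i := by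
    intro i
    induction i using Fin.cases with
    | zero => simpa [uext] using measurable_const
    | succ j => simpa [uext] using hmeas j
  have huext_bd : ∀ i : Fin (m + 1),
      ∀ᵐ τ ∂(volume.restrict (Set.Icc t0 t1)), |uext m u τ i| ≤ Rb := by
    intro i
    induction i using Fin.cases with
    | zero =>
      filter_upwards with τ
      simpa [uext] using hRb1
    | succ j =>
      filter_upwards [hbd j] with τ h
      simp only [uext, Fin.cases_succ]
      exact h.trans (le_max_left _ _)
  intro η
  induction η with
  | nil =>
    refine ⟨aestronglyMeasurable_const, ?_⟩
    intro t _
    simp [iterInt]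
  | cons i w ih =>
    obtain ⟨ihm, ihb⟩ := ih
    set k := w.length with hk
    set f : ℝ → ℝ := fun τ => uext m u τ i * iterInt m u t0 w τ with hf
    have hfm : AEStronglyMeasurable f (volume.restrict (Set.Icc t0 t1)) :=
      ((huext_meas i).aestronglyMeasurable).mul ihm
    have hfbd : ∀ᵐ τ ∂(volume.restrict (Set.Icc t0 t1)),
        |f τ| ≤ Rb ^ (k + 1) * (τ - t0) ^ k / k.factorial := by
      filter_upwards [huext_bd i, ae_restrict_mem measurableSet_Icc] with τ h1 h2
      have h3 := ihb τ h2
      have h4 : |f τ| = |uext m u τ i| * |iterInt m u t0 w τ| := abs_mul _ _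
      rw [h4]
      calc |uext m u τ i| * |iterInt m u t0 w τ|
          ≤ Rb * (Rb ^ k * (τ - t0) ^ k / k.factorial) := by
            apply mul_le_mul h1 h3 (abs_nonneg _) hRb0
        _ = Rb ^ (k + 1) * (τ - t0) ^ k / k.factorial := by rw [pow_succ]; ring
    set g : ℝ → ℝ := fun τ => Rb ^ (k + 1) * (τ - t0) ^ k / k.factorial with hg
    have hgc : Continuous g := by
      apply Continuous.div_const
      exact continuous_const.mul ((continuous_id.sub continuous_const).pow k)
    have hint : ∀ t ∈ Set.Icc t0 t1, IntervalIntegrable f volume t0 t := by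
      intro t ht
      rw [intervalIntegrable_iff_integrableOn_Ioc_of_le ht.1]
      have hsub : Set.Ioc t0 t ⊆ Set.Icc t0 t1 :=
        Set.Ioc_subset_Icc_self.trans (Set.Icc_subset_Icc le_rfl ht.2)
      refine Integrable.mono' (hgc.integrableOn_Ioc) ?_ ?_
      · exact hfm.mono_measure (Measure.restrict_mono hsub le_rfl)
      · have := ae_restrict_of_ae_restrict_of_subset hsub hfbd
        filter_upwards [this] with τ hτ
        simpa [Real.norm_eq_abs, hg] using hτ
    have hint1 : IntegrableOn f (Set.uIcc t0 t1) := by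
      rw [Set.uIcc_of_le hle, integrableOn_Icc_iff_integrableOn_Ioc]
      rw [← intervalIntegrable_iff_integrableOn_Ioc_of_le hle]
      exact hint t1 ⟨hle, le_rfl⟩
    have hcont : ContinuousOn (iterInt m u t0 (i :: w)) (Set.Icc t0 t1) := by
      have := intervalIntegral.continuousOn_primitive_interval hint1
      rw [Set.uIcc_of_le hle] at this
      exact this
    refine ⟨hcont.aestronglyMeasurable measurableSet_Icc, ?_⟩
    intro t ht
    have hg_int : ∫ τ in t0..t, g τ =
        Rb ^ (k + 1) * (t - t0) ^ (k + 1) / (k + 1).factorial := by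
      have hcg : ∀ τ, g τ = (Rb ^ (k + 1) / k.factorial) * ((fun x => x ^ k) (τ - t0)) := by
        intro τ; simp [hg]; ring
      rw [intervalIntegral.integral_congr (fun τ _ => hcg τ),
        intervalIntegral.integral_const_mul,
        intervalIntegral.integral_comp_sub_right (fun x => x ^ k) t0,
        integral_pow]
      have hfac : ((k + 1).factorial : ℝ) = (k + 1) * k.factorial := by
        push_cast [Nat.factorial_succ]; ring
      rw [hfac, sub_self, zero_pow (Nat.succ_ne_zero k), sub_zero]
      have h1 : (k.factorial : ℝ) ≠ 0 := Nat.cast_ne_zero.mpr k.factorial_ne_zero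
      have h2 : ((k : ℝ) + 1) ≠ 0 := by positivity
      rw [div_mul_div_comm, mul_comm ((k.factorial : ℝ))]
    have habs : |∫ τ in t0..t, f τ| ≤ |∫ τ in t0..t, g τ| := by
      rw [← Real.norm_eq_abs (∫ τ in t0..t, f τ)]
      apply intervalIntegral.norm_integral_le_abs_of_norm_le _ (hgc.intervalIntegrable t0 t)
      have hsub : Set.uIoc t0 t ⊆ Set.Icc t0 t1 := by
        rw [Set.uIoc_of_le ht.1]
        exact Set.Ioc_subset_Icc_self.trans (Set.Icc_subset_Icc le_rfl ht.2)
      have := ae_restrict_of_ae_restrict_of_subset hsub hfbd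
      filter_upwards [this] with τ hτ
      simpa [Real.norm_eq_abs, hg] using hτ
    have hnn : (0:ℝ) ≤ Rb ^ (k + 1) * (t - t0) ^ (k + 1) / (k + 1).factorial := by
      have : (0:ℝ) ≤ t - t0 := by linarith [ht.1]
      positivity
    have : |iterInt m u t0 (i :: w) t| ≤ Rb ^ (k + 1) * (t - t0) ^ (k + 1) / (k + 1).factorial := by
      calc |iterInt m u t0 (i :: w) t| = |∫ τ in t0..t, f τ| := rfl
        _ ≤ |∫ τ in t0..t, g τ| := habs
        _ = Rb ^ (k + 1) * (t - t0) ^ (k + 1) / (k + 1).factorial := by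
            rw [hg_int, abs_of_nonneg hnn]
    simpa [List.length_cons] using this

set_option maxHeartbeats 1000000 in
theorem fliess_global_convergence (m : ℕ) (t0 t1 K M R : ℝ)
    (hK : 0 < K) (hM : 0 < M) (hlt : t0 < t1)
    (c : List (Fin (m + 1)) → ℝ)
    (hc : ∀ η : List (Fin (m + 1)), |c η| ≤ K * M ^ η.length)
    (u : ℝ → Fin m → ℝ) (hmeas : ∀ i, Measurable fun t => u t i)
    (hbd : ∀ i, ∀ᵐ t ∂(volume.restrict (Set.Icc t0 t1)), |u t i| ≤ R) :
    ∀ t ∈ Set.Icc t0 t1,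
      Summable (fun η : List (Fin (m + 1)) => |c η| * |iterInt m u t0 η t|) ∧
      |∑' η : List (Fin (m + 1)), c η * iterInt m u t0 η t| ≤
        K * Real.exp ((m + 1 : ℝ) * M * max R 1 * (t - t0)) := by
  intro t ht
  have key := iter_key m t0 t1 R hlt.le u hmeas hbd
  set Rb := max R 1 with hRb
  have hRb0 : (0:ℝ) < Rb := lt_of_lt_of_le one_pos (le_max_right _ _)
  have htt0 : (0:ℝ) ≤ t - t0 := by linarith [ht.1]
  obtain ⟨a, ha⟩ : ∃ a : ℝ, a = M * Rb * (t - t0) := ⟨_, rfl⟩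
  have ha0 : 0 ≤ a := by rw [ha]; positivity
  set g : List (Fin (m + 1)) → ℝ := fun η => K * a ^ η.length / η.length.factorial with hg
  have hle_g : ∀ η, |c η| * |iterInt m u t0 η t| ≤ g η := by
    intro η
    have h1 := hc η
    have h2 := (key η).2 t ht
    calc |c η| * |iterInt m u t0 η t|
        ≤ (K * M ^ η.length) * (Rb ^ η.length * (t - t0) ^ η.length / η.length.factorial) := by
          apply mul_le_mul h1 h2 (abs_nonneg _) (by positivity)
      _ = g η := by
          simp only [hg, ha, mul_pow]
          ring
  set e := (List.equivSigmaTuple (α := Fin (m + 1))) with he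
  set h : (Σ k : ℕ, Fin k → Fin (m + 1)) → ℝ := fun p => K * a ^ p.1 / p.1.factorial with hh
  have hge : ∀ η, g η = h (e η) := fun η => rfl
  have hinner : ∀ k : ℕ, ∑' _ : Fin k → Fin (m + 1), (K * a ^ k / k.factorial : ℝ)
      = ((m + 1 : ℝ)) ^ k * (K * a ^ k / k.factorial) := by
    intro k
    rw [tsum_fintype]
    simp only [Finset.sum_const, Finset.card_univ, nsmul_eq_mul]
    congr 1
    rw [Fintype.card_fun]
    push_cast
    simp
  have houter : (fun k : ℕ => ∑' x : Fin k → Fin (m + 1), h ⟨k, x⟩)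
      = fun k : ℕ => K * ((m + 1 : ℝ) * a) ^ k / k.factorial := by
    funext k
    rw [show (fun x : Fin k → Fin (m + 1) => h ⟨k, x⟩) = fun _ => (K * a ^ k / k.factorial : ℝ) from rfl]
    rw [hinner k, mul_pow]
    ring
  have hsum_h : Summable h := by
    refine (summable_sigma_of_nonneg fun p => by simp only [hh]; positivity).mpr
      ⟨fun _ => Summable.of_finite, ?_⟩
    exact ((Real.summable_pow_div_factorial ((m + 1 : ℝ) * a)).mul_left K).congr
      fun k => by rw [congrFun houter k]; ring
  have hsum_g : Summable g := by
    have : Summable (h ∘ e) := e.summable_iff.mpr hsum_h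
    exact this.congr fun η => (hge η).symm
  have hsum1 : Summable (fun η : List (Fin (m + 1)) => |c η| * |iterInt m u t0 η t|) :=
    Summable.of_nonneg_of_le (fun η => by positivity) hle_g hsum_g
  refine ⟨hsum1, ?_⟩
  have step1 : |∑' η : List (Fin (m + 1)), c η * iterInt m u t0 η t|
      ≤ ∑' η : List (Fin (m + 1)), |c η| * |iterInt m u t0 η t| := by
    have := norm_tsum_le_tsum_norm (f := fun η : List (Fin (m + 1)) => c η * iterInt m u t0 η t)
      (by simpa [Real.norm_eq_abs, abs_mul] using hsum1)
    simpa [Real.norm_eq_abs, abs_mul] using this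
  have step2 : ∑' η : List (Fin (m + 1)), |c η| * |iterInt m u t0 η t|
      ≤ ∑' η, g η := Summable.tsum_le_tsum hle_g hsum1 hsum_g
  have step3 : ∑' η, g η = K * Real.exp ((m + 1 : ℝ) * a) := by
    calc ∑' η, g η = ∑' η, h (e η) := tsum_congr hge
      _ = ∑' p, h p := e.tsum_eq h
      _ = ∑' k : ℕ, ∑' x : Fin k → Fin (m + 1), h ⟨k, x⟩ := Summable.tsum_sigma hsum_h
      _ = ∑' k : ℕ, K * ((m + 1 : ℝ) * a) ^ k / k.factorial := by rw [houter]
      _ = K * ∑' k : ℕ, ((m + 1 : ℝ) * a) ^ k / k.factorial := by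
          rw [← tsum_mul_left]
          exact tsum_congr fun k => by ring
      _ = K * Real.exp ((m + 1 : ℝ) * a) := by
          rw [Real.exp_eq_exp_ℝ, NormedSpace.exp_eq_tsum_div]
  have hfinal : (m + 1 : ℝ) * a = (m + 1 : ℝ) * M * Rb * (t - t0) := by rw [ha]; ring
  calc |∑' η : List (Fin (m + 1)), c η * iterInt m u t0 η t|
      ≤ ∑' η, g η := step1.trans step2
    _ = K * Real.exp ((m + 1 : ℝ) * M * Rb * (t - t0)) := by rw [step3, hfinal]
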